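/- arXiv:2102.06264 — 2 statements merged into one kernel-verified Lean document; each statement's English description precedes it below -/
import Mathlib

section
/- Let R be a commutative ring and A an R-algebra that is separable as an R-algebra and finitely generated projective as an R-module. Then a right A-module M is projective as an A-module if and only if it is projective as an R-module. -/
open TensorProduct

/-- An `R`-algebra `A` is separable if it admits a separability idempotent, i.e. an element
`e` of `A ⊗[R] A` mapping to `1` under multiplication and satisfying `(a ⊗ 1) * e = e * (1 ⊗ a)`
for all `a` (this is equivalent to `A` being projective over its enveloping algebra). -/
def IsSeparableAlgebra (R : Type*) (A : Type*) [CommRing R] [Ring A] [Algebra R A] : Prop :=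
  ∃ e : A ⊗[R] A, (LinearMap.mul' R A) e = 1 ∧
    ∀ a : A, (a ⊗ₜ[R] (1 : A)) * e = e * ((1 : A) ⊗ₜ[R] a)
section Helpers

variable {R S : Type*} [CommRing R] [Ring S] [Algebra R S]

theorem finsupp_projective {ι N : Type*} [AddCommGroup N] [Module R N]
    [Module.Projective R N] : Module.Projective R (ι →₀ N) := by
  have h1 : Module.Projective R (ι →₀ (N →₀ R)) :=
    Module.Projective.of_equiv (Finsupp.finsuppProdLEquiv R (α := ι) (β := N) (M := R))
  obtain ⟨f, hf⟩ := ‹Module.Projective R N›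
  refine Module.Projective.of_split (M := ι →₀ (N →₀ R))
    (Finsupp.mapRange.linearMap f)
    (Finsupp.mapRange.linearMap (Finsupp.linearCombination R id)) ?_
  ext v i
  simp [hf i]

theorem projective_trans (M : Type*) [AddCommGroup M] [Module S M] [Module R M]
    [IsScalarTower R S M] [Module.Projective S M] [Module.Projective R S] :
    Module.Projective R M := by
  obtain ⟨f, hf⟩ := ‹Module.Projective S M›
  have : Module.Projective R (M →₀ S) := finsupp_projective
  exact Module.Projective.of_split (f.restrictScalars R)
    (((Finsupp.linearCombination S id).restrictScalars R)) (by ext m; exact hf m)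

theorem projective_op_self (A : Type*) [Ring A] : Module.Projective Aᵐᵒᵖ A := by
  refine Module.Projective.of_equiv' (R := Aᵐᵒᵖ) (M := Aᵐᵒᵖ)
    { toFun := MulOpposite.unop, invFun := MulOpposite.op,
      map_add' := fun _ _ => rfl,
      map_smul' := fun b x => by
        simp [MulOpposite.smul_eq_mul_unop, MulOpposite.unop_mul, smul_eq_mul]
      left_inv := fun _ => rfl, right_inv := fun _ => rfl }

end Helpers

theorem projective_over_algebra_iff_projective_over_base'
    (R A M : Type*) [CommRing R] [Ring A] [Algebra R A]
    (hsep : ∃ e : A ⊗[R] A, (LinearMap.mul' R A) e = 1 ∧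
      ∀ a : A, (a ⊗ₜ[R] (1 : A)) * e = e * ((1 : A) ⊗ₜ[R] a))
    (hproj : Module.Projective R A)
    [AddCommGroup M] [Module Aᵐᵒᵖ M] [Module R M] [IsScalarTower R Aᵐᵒᵖ M] :
    Module.Projective Aᵐᵒᵖ M ↔ Module.Projective R M := by
  constructor
  · intro h
    have : Module.Projective R Aᵐᵒᵖ :=
      Module.Projective.of_equiv (MulOpposite.opLinearEquiv R (M := A))
    exact projective_trans (S := Aᵐᵒᵖ) M
  · intro h
    obtain ⟨e, he1, he2⟩ := hsep
    have hA : Module.Projective Aᵐᵒᵖ A := projective_op_self A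
    have hten : Module.Projective Aᵐᵒᵖ (A ⊗[R] M) := Module.Projective.tensorProduct
    let Ψ : A ⊗[R] A →ₗ[R] M →ₗ[R] A ⊗[R] M :=
      TensorProduct.lift (LinearMap.mk₂ R
        (fun x y => (TensorProduct.mk R A M y).comp
          (DistribMulAction.toLinearMap R M (MulOpposite.op x)))
        (fun x x' y => by
          ext m
          show y ⊗ₜ[R] (MulOpposite.op (x + x') • m)
            = y ⊗ₜ[R] (MulOpposite.op x • m) + y ⊗ₜ[R] (MulOpposite.op x' • m)
          rw [MulOpposite.op_add, add_smul, tmul_add])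
        (fun r x y => by
          ext m
          show y ⊗ₜ[R] (MulOpposite.op (r • x) • m) = r • (y ⊗ₜ[R] (MulOpposite.op x • m))
          rw [MulOpposite.op_smul, smul_assoc, tmul_smul])
        (fun x y y' => by
          ext m
          show (y + y') ⊗ₜ[R] (MulOpposite.op x • m)
            = y ⊗ₜ[R] (MulOpposite.op x • m) + y' ⊗ₜ[R] (MulOpposite.op x • m)
          rw [add_tmul])
        (fun r x y => by
          ext m
          show (r • y) ⊗ₜ[R] (MulOpposite.op x • m) = r • (y ⊗ₜ[R] (MulOpposite.op x • m))
          rw [smul_tmul']))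
    let π₀ : A ⊗[R] M →ₗ[R] M :=
      TensorProduct.lift (LinearMap.mk₂ R (fun y m => MulOpposite.op y • m)
        (fun y y' m => by
          show MulOpposite.op (y + y') • m = MulOpposite.op y • m + MulOpposite.op y' • m
          rw [MulOpposite.op_add, add_smul])
        (fun r y m => by
          show MulOpposite.op (r • y) • m = r • (MulOpposite.op y • m)
          rw [MulOpposite.op_smul, smul_assoc])
        (fun y m m' => smul_add _ _ _)
        (fun r y m => smul_comm _ _ _))
    have hπ₀ : ∀ (b : Aᵐᵒᵖ) (t : A ⊗[R] M), π₀ (b • t) = b • π₀ t := by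
      intro b t
      induction t using TensorProduct.induction_on with
      | zero => simp
      | tmul y m =>
        simp only [smul_tmul', π₀, TensorProduct.lift.tmul, LinearMap.mk₂_apply]
        rw [MulOpposite.smul_eq_mul_unop, MulOpposite.op_mul, MulOpposite.op_unop, mul_smul]
      | add t₁ t₂ h₁ h₂ => simp only [smul_add, map_add, h₁, h₂]
    let π : A ⊗[R] M →ₗ[Aᵐᵒᵖ] M :=
      { toFun := π₀, map_add' := map_add π₀, map_smul' := hπ₀ }
    have hL1 : ∀ (a : A) (t : A ⊗[R] A) (m : M),
        Ψ ((a ⊗ₜ[R] (1:A)) * t) m = Ψ t (MulOpposite.op a • m) := by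
      intro a t m
      induction t using TensorProduct.induction_on with
      | zero => simp only [mul_zero, map_zero, LinearMap.zero_apply]
      | tmul x y =>
        simp only [Algebra.TensorProduct.tmul_mul_tmul, one_mul, Ψ, TensorProduct.lift.tmul,
          LinearMap.mk₂_apply, LinearMap.comp_apply, DistribMulAction.toLinearMap, DistribSMul.toLinearMap_apply,
          TensorProduct.mk_apply]
        rw [MulOpposite.op_mul, mul_smul]
      | add t₁ t₂ h₁ h₂ => simp only [mul_add, map_add, LinearMap.add_apply, h₁, h₂]
    have hL2 : ∀ (a : A) (t : A ⊗[R] A) (m : M),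
        Ψ (t * ((1:A) ⊗ₜ[R] a)) m = MulOpposite.op a • Ψ t m := by
      intro a t m
      induction t using TensorProduct.induction_on with
      | zero => simp only [zero_mul, map_zero, LinearMap.zero_apply, smul_zero]
      | tmul x y =>
        simp only [Algebra.TensorProduct.tmul_mul_tmul, mul_one, Ψ, TensorProduct.lift.tmul,
          LinearMap.mk₂_apply, LinearMap.comp_apply, DistribMulAction.toLinearMap, DistribSMul.toLinearMap_apply,
          TensorProduct.mk_apply]
        rw [smul_tmul']; simp only [MulOpposite.smul_eq_mul_unop, MulOpposite.unop_op]
      | add t₁ t₂ h₁ h₂ => simp only [add_mul, map_add, LinearMap.add_apply, h₁, h₂, smul_add]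
    let s : M →ₗ[Aᵐᵒᵖ] A ⊗[R] M :=
      { toFun := Ψ e, map_add' := map_add (Ψ e),
        map_smul' := fun b m => by
          show Ψ e (b • m) = b • Ψ e m
          have := hL1 b.unop e m
          rw [he2 b.unop, MulOpposite.op_unop] at this
          rw [← this, hL2, MulOpposite.op_unop] }
    have hkey : ∀ (t : A ⊗[R] A) (m : M),
        π₀ (Ψ t m) = MulOpposite.op (LinearMap.mul' R A t) • m := by
      intro t m
      induction t using TensorProduct.induction_on with
      | zero => simp
      | tmul x y =>
        simp only [Ψ, π₀, TensorProduct.lift.tmul, LinearMap.mk₂_apply, LinearMap.comp_apply,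
          DistribMulAction.toLinearMap, DistribSMul.toLinearMap_apply, TensorProduct.mk_apply, LinearMap.mul'_apply]
        rw [MulOpposite.op_mul, mul_smul]
      | add t₁ t₂ h₁ h₂ => simp only [map_add, LinearMap.add_apply, h₁, h₂, MulOpposite.op_add, add_smul]
    refine Module.Projective.of_split s π ?_
    ext m
    show π₀ (Ψ e m) = m
    rw [hkey e m, he1, MulOpposite.op_one, one_smul]

/-- Let `R` be a commutative ring and `A` an `R`-algebra that is separable as an `R`-algebra and
finitely generated projective as an `R`-module.  Then a right `A`-module `M` (encoded as a module
over `Aᵐᵒᵖ`) is projective as an `A`-module if and only if it is projective as an `R`-module. -/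
theorem projective_over_algebra_iff_projective_over_base
    (R A M : Type*) [CommRing R] [Ring A] [Algebra R A]
    (hsep : IsSeparableAlgebra R A)
    (hproj : Module.Projective R A) (hfin : Module.Finite R A)
    [AddCommGroup M] [Module Aᵐᵒᵖ M] [Module R M] [IsScalarTower R Aᵐᵒᵖ M] :
    Module.Projective Aᵐᵒᵖ M ↔ Module.Projective R M :=
  projective_over_algebra_iff_projective_over_base' R A M hsep hproj
end

section
/- Let A be an associative algebra over a commutative ring R, Z an (A^op, A)-bimodule that is an (A^op,A)-progenerator satisfying rz = zr for all r ∈ R, z ∈ Z, and θ : Z → Z an R-linear map with (a^op z b)^θ = b^op z^θ a and z^θθ = z. For P a finitely generated projective right A-module define P* = Hom_A(P, Z) with right A-action (φa)x = a^op(φx), and ω_P : P → P** by (ω_P x)φ = (φx)^θ. Then P* is finitely generated projective as a right A-module and ω_P is an isomorphism for every finitely generated projective right A-module P. -/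
open MulOpposite

noncomputable section

namespace DualAux

universe v

variable {A : Type v} [Ring A] {Z : Type v} [AddCommGroup Z] [Module Aᵐᵒᵖ Z]
  {P : Type v} [AddCommGroup P] [Module Aᵐᵒᵖ P]

/-- `u ↦ op (ρ (single m u)) • z`, an `Aᵐᵒᵖ`-linear endomorphism of `Z`. -/
def bmap {n : ℕ} (ρ : (Fin n → Z) →ₗ[Aᵐᵒᵖ] A) (m : Fin n) (z : Z) : Z →ₗ[Aᵐᵒᵖ] Z where
  toFun u := op (ρ (Pi.single m u)) • z
  map_add' u v := by rw [Pi.single_add, map_add, op_add, add_smul]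
  map_smul' c u := by
    rw [Pi.single_smul, map_smul, RingHom.id_apply, MulOpposite.smul_eq_mul_unop, op_mul,
      op_unop, mul_smul]

@[simp] lemma bmap_apply {n : ℕ} (ρ : (Fin n → Z) →ₗ[Aᵐᵒᵖ] A) (m : Fin n) (z u : Z) :
    bmap ρ m z u = op (ρ (Pi.single m u)) • z := rfl

lemma bmap_add {n : ℕ} (ρ : (Fin n → Z) →ₗ[Aᵐᵒᵖ] A) (m : Fin n) (z z' : Z) :
    bmap ρ m (z + z') = bmap ρ m z + bmap ρ m z' := by
  ext u; simp [smul_add]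

lemma bmap_endsmul {n : ℕ} (ρ : (Fin n → Z) →ₗ[Aᵐᵒᵖ] A) (m : Fin n)
    (b : Module.End Aᵐᵒᵖ Z) (z : Z) : bmap ρ m (b z) = b * bmap ρ m z := by
  ext u
  simp [Module.End.mul_apply, map_smul]

/-- `x ↦ (s x j) • z`, an `Aᵐᵒᵖ`-linear map `P → Z`. -/
def phiAux {k : ℕ} (s : P →ₗ[Aᵐᵒᵖ] (Fin k → Aᵐᵒᵖ)) (j : Fin k) (z : Z) : P →ₗ[Aᵐᵒᵖ] Z where
  toFun x := s x j • z
  map_add' x y := by simp [add_smul]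
  map_smul' c x := by simp [smul_eq_mul, mul_smul]

@[simp] lemma phiAux_apply {k : ℕ} (s : P →ₗ[Aᵐᵒᵖ] (Fin k → Aᵐᵒᵖ)) (j : Fin k) (z : Z) (x : P) :
    phiAux s j z x = s x j • z := rfl

lemma phiAux_add {k : ℕ} (s : P →ₗ[Aᵐᵒᵖ] (Fin k → Aᵐᵒᵖ)) (j : Fin k) (z z' : Z) :
    phiAux s j (z + z') = phiAux s j z + phiAux s j z' := by
  ext x; simp [smul_add]

lemma smul_phiAux {k : ℕ} (s : P →ₗ[Aᵐᵒᵖ] (Fin k → Aᵐᵒᵖ)) (j : Fin k)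
    (b : Module.End Aᵐᵒᵖ Z) (z : Z) : b • phiAux s j z = phiAux s j (b z) := by
  ext x
  simp [Module.End.smul_def, map_smul]

/-- `phiAux` as an additive monoid homomorphism in `z`. -/
def phiAuxH {k : ℕ} (s : P →ₗ[Aᵐᵒᵖ] (Fin k → Aᵐᵒᵖ)) (j : Fin k) : Z →+ (P →ₗ[Aᵐᵒᵖ] Z) where
  toFun := phiAux s j
  map_zero' := by ext x; simp
  map_add' := phiAux_add s j

@[simp] lemma phiAuxH_apply {k : ℕ} (s : P →ₗ[Aᵐᵒᵖ] (Fin k → Aᵐᵒᵖ)) (j : Fin k) (z : Z) :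
    phiAuxH s j z = phiAux s j z := rfl

/-- `x ↦ ι (unop (s x j)) m`, an `Aᵐᵒᵖ`-linear map `P → Z`. -/
def psiAux {k n : ℕ} (s : P →ₗ[Aᵐᵒᵖ] (Fin k → Aᵐᵒᵖ)) (ι : A →ₗ[Aᵐᵒᵖ] (Fin n → Z))
    (j : Fin k) (m : Fin n) : P →ₗ[Aᵐᵒᵖ] Z where
  toFun x := ι (unop (s x j)) m
  map_add' x y := by simp
  map_smul' c x := by
    have h1 : unop ((c • s x) j) = c • unop (s x j) := by
      simp [MulOpposite.smul_eq_mul_unop, unop_mul]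
    rw [map_smul, RingHom.id_apply, h1, map_smul]
    simp

@[simp] lemma psiAux_apply {k n : ℕ} (s : P →ₗ[Aᵐᵒᵖ] (Fin k → Aᵐᵒᵖ))
    (ι : A →ₗ[Aᵐᵒᵖ] (Fin n → Z)) (j : Fin k) (m : Fin n) (x : P) :
    psiAux s ι j m x = ι (unop (s x j)) m := rfl

/-- The map exhibiting `P*` as a direct summand of a finite free module over
`B = End(Z)`. -/
def Umap {n k : ℕ} (ρ : (Fin n → Z) →ₗ[Aᵐᵒᵖ] A) (π : (Fin k → Aᵐᵒᵖ) →ₗ[Aᵐᵒᵖ] P) :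
    (P →ₗ[Aᵐᵒᵖ] Z) →ₗ[Module.End Aᵐᵒᵖ Z] (Fin k → Fin n → Module.End Aᵐᵒᵖ Z) where
  toFun φ := fun j m => bmap ρ m (φ (π (Pi.single j 1)))
  map_add' φ ψ := by
    funext j m
    simp [bmap_add]
  map_smul' b φ := by
    funext j m
    simp only [LinearMap.smul_apply, Module.End.smul_def, RingHom.id_apply, Pi.smul_apply,
      smul_eq_mul]
    rw [bmap_endsmul]

@[simp] lemma Umap_apply {n k : ℕ} (ρ : (Fin n → Z) →ₗ[Aᵐᵒᵖ] A)
    (π : (Fin k → Aᵐᵒᵖ) →ₗ[Aᵐᵒᵖ] P) (φ : P →ₗ[Aᵐᵒᵖ] Z) (j : Fin k) (m : Fin n) :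
    Umap ρ π φ j m = bmap ρ m (φ (π (Pi.single j 1))) := rfl

/-- The retraction from the finite free module over `B = End(Z)` onto `P*`. -/
def Vmap {n k : ℕ} (ι : A →ₗ[Aᵐᵒᵖ] (Fin n → Z)) (s : P →ₗ[Aᵐᵒᵖ] (Fin k → Aᵐᵒᵖ)) :
    (Fin k → Fin n → Module.End Aᵐᵒᵖ Z) →ₗ[Module.End Aᵐᵒᵖ Z] (P →ₗ[Aᵐᵒᵖ] Z) where
  toFun F := ∑ j, ∑ m, phiAux s j (F j m (ι 1 m))
  map_add' F G := by
    simp [phiAux_add, Finset.sum_add_distrib]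
  map_smul' b F := by
    simp only [Pi.smul_apply, Module.End.smul_def, Module.End.mul_apply, RingHom.id_apply,
      smul_eq_mul]
    rw [Finset.smul_sum]
    refine Finset.sum_congr rfl fun j _ => ?_
    rw [Finset.smul_sum]
    refine Finset.sum_congr rfl fun m _ => ?_
    rw [smul_phiAux]

@[simp] lemma Vmap_apply {n k : ℕ} (ι : A →ₗ[Aᵐᵒᵖ] (Fin n → Z))
    (s : P →ₗ[Aᵐᵒᵖ] (Fin k → Aᵐᵒᵖ)) (F : Fin k → Fin n → Module.End Aᵐᵒᵖ Z) :
    Vmap ι s F = ∑ j, ∑ m, phiAux s j (F j m (ι 1 m)) := rfl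

end DualAux

/-- Let `A` be an associative algebra over a commutative ring `R` and `Z` an
`(Aᵒᵖ, A)`-bimodule which is an `(Aᵒᵖ, A)`-progenerator, with `rz = zr` for `r ∈ R`, and
`θ : Z → Z` an `R`-linear map with `(aᵒᵖ z b)^θ = bᵒᵖ z^θ a` and `θ ∘ θ = id`.
For `P` a finitely generated projective right `A`-module, `P* = Hom_A(P, Z)` with the right
`A`-action `(φa)x = aᵒᵖ(φx)` is finitely generated projective, and the double-dual map
`ω_P : P → P**`, `(ω_P x)(φ) = (φ x)^θ`, is an isomorphism.

Encoding: right `A`-modules are `Aᵐᵒᵖ`-modules; the left `Aᵒᵖ`-action on `Z` is encoded by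
a ring homomorphism `L : Aᵐᵒᵖ →+* Module.End Aᵐᵒᵖ Z` (so `aᵒᵖ z = L (op a) z`), which is
bijective precisely because `Z` is a progenerator; the right `A`-module structure on
`P* = P →ₗ[Aᵐᵒᵖ] Z` is then the module structure over `B = Module.End Aᵐᵒᵖ Z` given by
postcomposition, transported along `L`; and `P**` consists of the maps `P* → Z` that are
semilinear with respect to the inverse of `L`. -/
theorem dual_of_finite_projective_is_finite_projective_and_double_dual_bijective
    (R A : Type u) [CommRing R] [Ring A] [Algebra R A]
    (Z : Type u) [AddCommGroup Z] [Module Aᵐᵒᵖ Z] [Module R Z] [IsScalarTower R Aᵐᵒᵖ Z]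
    (L : Aᵐᵒᵖ →+* Module.End Aᵐᵒᵖ Z)
    -- `rz = zr` for all `r : R`, `z : Z`:
    (hRL : ∀ (r : R) (z : Z), L (op (algebraMap R A r)) z = op (algebraMap R A r) • z)
    -- `Z` is an `(Aᵒᵖ, A)`-progenerator:
    [Module.Finite Aᵐᵒᵖ Z] [Module.Projective Aᵐᵒᵖ Z]
    (hgen : ∃ (n : ℕ) (i : A →ₗ[Aᵐᵒᵖ] (Fin n → Z)) (π : (Fin n → Z) →ₗ[Aᵐᵒᵖ] A),
      π.comp i = LinearMap.id)
    (hbij : Function.Bijective L)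
    -- the involution `θ`:
    (θ : Z →ₗ[R] Z)
    (hθθ : ∀ z : Z, θ (θ z) = z)
    (hθ : ∀ (a b : A) (z : Z),
      θ (op b • (L (op a) z)) = op a • (L (op b) (θ z)))
    -- a finitely generated projective right `A`-module `P`:
    (P : Type u) [AddCommGroup P] [Module Aᵐᵒᵖ P]
    [Module.Finite Aᵐᵒᵖ P] [Module.Projective Aᵐᵒᵖ P] :
    Module.Finite (Module.End Aᵐᵒᵖ Z) (P →ₗ[Aᵐᵒᵖ] Z) ∧
    Module.Projective (Module.End Aᵐᵒᵖ Z) (P →ₗ[Aᵐᵒᵖ] Z) ∧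
    (∀ x y : P, (∀ φ : P →ₗ[Aᵐᵒᵖ] Z, θ (φ x) = θ (φ y)) → x = y) ∧
    (∀ g : (P →ₗ[Aᵐᵒᵖ] Z) →ₛₗ[((RingEquiv.ofBijective L hbij).symm :
            Module.End Aᵐᵒᵖ Z ≃+* Aᵐᵒᵖ).toRingHom] Z,
      ∃ x : P, ∀ φ : P →ₗ[Aᵐᵒᵖ] Z, g φ = θ (φ x)) := by
  classical
  obtain ⟨n, ι, ρ, hρι⟩ := hgen
  obtain ⟨k, π, hπ⟩ := Module.Finite.exists_fin' Aᵐᵒᵖ P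
  obtain ⟨s, hs⟩ := Module.projective_lifting_property π LinearMap.id hπ
  have hπs : ∀ x : P, π (s x) = x := fun x => by
    have := LinearMap.congr_fun hs x
    simpa using this
  have hρι' : ∀ a : A, ρ (ι a) = a := fun a => by
    have := LinearMap.congr_fun hρι a
    simpa using this
  -- `θ` swaps the two actions
  have hT2 : ∀ (b : A) (z : Z), θ (op b • z) = L (op b) (θ z) := by
    intro b z
    have := hθ 1 b z
    simpa using this
  -- the single-coordinate sum identity
  have hsingle : ∀ (v : Fin n → Z), (∑ m, Pi.single m (v m)) = v := by
    intro v; funext i; simp [Finset.sum_apply, Pi.single_apply]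
  have hsingle' : ∀ (v : Fin k → Aᵐᵒᵖ), (∑ j, Pi.single j (v j)) = v := by
    intro v; funext i; simp [Finset.sum_apply, Pi.single_apply]
  have hsingle_smul : ∀ (j : Fin k) (c : Aᵐᵒᵖ),
      (Pi.single j c : Fin k → Aᵐᵒᵖ) = c • (Pi.single j 1 : Fin k → Aᵐᵒᵖ) := by
    intro j c
    rw [← Pi.single_smul, smul_eq_mul, mul_one]
  have hone : ∀ z : Z, (∑ m, op (ρ (Pi.single m (ι 1 m))) • z) = z := by
    intro z
    rw [← Finset.sum_smul, ← Finset.op_sum, ← map_sum, hsingle (ι 1), hρι', op_one, one_smul]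
  have hsum2 : ∀ (φ : P →ₗ[Aᵐᵒᵖ] Z) (x : P),
      (∑ j, s x j • φ (π (Pi.single j 1))) = φ x := by
    intro φ x
    calc (∑ j, s x j • φ (π (Pi.single j 1)))
        = ∑ j, φ (π (s x j • Pi.single j 1)) := by
          refine Finset.sum_congr rfl fun j _ => ?_
          rw [map_smul, map_smul]
      _ = φ (π (∑ j, s x j • Pi.single j 1)) := by rw [map_sum, map_sum]
      _ = φ (π (s x)) := by
          congr 1
          rw [show (∑ j, s x j • Pi.single j (1 : Aᵐᵒᵖ)) = ∑ j, Pi.single j (s x j) from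
            Finset.sum_congr rfl fun j _ => (hsingle_smul j (s x j)).symm, hsingle']
      _ = φ x := by rw [hπs]
  -- double centralizer property: additive maps commuting with `End` are given by `A`
  have key : ∀ (kk : Z →+ Z), (∀ (b : Module.End Aᵐᵒᵖ Z) (z : Z), kk (b z) = b (kk z)) →
      ∃ a : A, ∀ w : Z, kk w = op a • w := by
    intro kk hk
    refine ⟨∑ m, ρ (Pi.single m (kk (ι 1 m))), fun w => ?_⟩
    have h1 : ∀ (m : Fin n) (zz : Z),
        kk (op (ρ (Pi.single m zz)) • w) = op (ρ (Pi.single m (kk zz))) • w := by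
      intro m zz
      have := hk (DualAux.bmap ρ m w) zz
      simpa [DualAux.bmap_apply] using this
    calc kk w = kk (∑ m, op (ρ (Pi.single m (ι 1 m))) • w) := by rw [hone]
      _ = ∑ m, kk (op (ρ (Pi.single m (ι 1 m))) • w) := map_sum kk _ _
      _ = ∑ m, op (ρ (Pi.single m (kk (ι 1 m)))) • w :=
          Finset.sum_congr rfl fun m _ => h1 m (ι 1 m)
      _ = (∑ m, op (ρ (Pi.single m (kk (ι 1 m))))) • w := (Finset.sum_smul).symm
      _ = op (∑ m, ρ (Pi.single m (kk (ι 1 m)))) • w := by rw [Finset.op_sum]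
  have hLσ : ∀ b : Module.End Aᵐᵒᵖ Z,
      L ((RingEquiv.ofBijective L hbij).symm b) = b := fun b =>
    (RingEquiv.ofBijective L hbij).apply_symm_apply b
  -- main lemma: additive maps `Z → Z` semilinear over `σ` have the form `z ↦ θ (op a • z)`
  have main : ∀ (h : Z →+ Z),
      (∀ (b : Module.End Aᵐᵒᵖ Z) (z : Z),
        h (b z) = ((RingEquiv.ofBijective L hbij).symm b : Aᵐᵒᵖ) • h z) →
      ∃ a : A, ∀ z, h z = θ (op a • z) := by
    intro h hh
    have hk : ∀ (b : Module.End Aᵐᵒᵖ Z) (z : Z),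
        (θ.toAddMonoidHom.comp h) (b z) = b ((θ.toAddMonoidHom.comp h) z) := by
      intro b z
      simp only [AddMonoidHom.comp_apply, LinearMap.toAddMonoidHom_coe]
      rw [hh]
      rw [← op_unop (((RingEquiv.ofBijective L hbij).symm b : Aᵐᵒᵖ)), hT2, op_unop, hLσ]
    obtain ⟨a, ha⟩ := key _ hk
    refine ⟨a, fun z => ?_⟩
    have h2 := ha z
    simp only [AddMonoidHom.comp_apply, LinearMap.toAddMonoidHom_coe] at h2
    calc h z = θ (θ (h z)) := (hθθ _).symm
      _ = θ (op a • z) := by rw [h2]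
  -- injectivity of the double-dual map
  have inj : ∀ x y : P, (∀ φ : P →ₗ[Aᵐᵒᵖ] Z, θ (φ x) = θ (φ y)) → x = y := by
    intro x y hxy
    have hphi : ∀ φ : P →ₗ[Aᵐᵒᵖ] Z, φ x = φ y := by
      intro φ
      have := congrArg θ (hxy φ)
      rwa [hθθ, hθθ] at this
    have hsxy : s x = s y := by
      funext j
      have hι : ι (unop (s x j)) = ι (unop (s y j)) := by
        funext m
        exact hphi (DualAux.psiAux s ι j m)
      have h3 := congrArg ρ hι
      rw [hρι', hρι'] at h3
      exact unop_injective h3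
    calc x = π (s x) := (hπs x).symm
      _ = π (s y) := by rw [hsxy]
      _ = y := hπs y
  -- surjectivity of the double-dual map
  have surj : ∀ g : (P →ₗ[Aᵐᵒᵖ] Z) →ₛₗ[((RingEquiv.ofBijective L hbij).symm :
          Module.End Aᵐᵒᵖ Z ≃+* Aᵐᵒᵖ).toRingHom] Z,
      ∃ x : P, ∀ φ : P →ₗ[Aᵐᵒᵖ] Z, g φ = θ (φ x) := by
    intro g
    have hchoice : ∀ j : Fin k, ∃ a : A, ∀ z, g (DualAux.phiAux s j z) = θ (op a • z) := by
      intro j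
      refine main (g.toAddMonoidHom.comp (DualAux.phiAuxH s j)) ?_
      intro b z
      have hb : DualAux.phiAux s j (b z) = b • DualAux.phiAux s j z :=
        (DualAux.smul_phiAux s j b z).symm
      simp only [AddMonoidHom.comp_apply, LinearMap.toAddMonoidHom_coe,
        DualAux.phiAuxH_apply]
      rw [hb, g.map_smulₛₗ]
      rfl
    choose a ha using hchoice
    refine ⟨π (fun j => op (a j)), fun φ => ?_⟩
    have hx : φ (π fun j => op (a j)) = ∑ j, op (a j) • φ (π (Pi.single j 1)) := by
      conv_lhs => rw [show (fun j => op (a j)) = ∑ j, Pi.single j (op (a j)) from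
        (hsingle' _).symm]
      rw [map_sum, map_sum]
      refine Finset.sum_congr rfl fun j _ => ?_
      rw [hsingle_smul j (op (a j)), map_smul, map_smul]
    have hφ : (∑ j, DualAux.phiAux s j (φ (π (Pi.single j 1)))) = φ := by
      ext x'
      rw [LinearMap.sum_apply]
      simp only [DualAux.phiAux_apply]
      exact hsum2 φ x'
    calc g φ = g (∑ j, DualAux.phiAux s j (φ (π (Pi.single j 1)))) := by rw [hφ]
      _ = ∑ j, g (DualAux.phiAux s j (φ (π (Pi.single j 1)))) := map_sum g _ _
      _ = ∑ j, θ (op (a j) • φ (π (Pi.single j 1))) :=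
          Finset.sum_congr rfl fun j _ => ha j _
      _ = θ (∑ j, op (a j) • φ (π (Pi.single j 1))) := (map_sum θ _ _).symm
      _ = θ (φ (π fun j => op (a j))) := by rw [← hx]
  -- the splitting of `P*` as a summand of a finite free `End(Z)`-module
  have hVU : (DualAux.Vmap ι s).comp (DualAux.Umap ρ π) = LinearMap.id := by
    ext φ x
    simp only [LinearMap.comp_apply, LinearMap.id_apply, DualAux.Vmap_apply,
      DualAux.Umap_apply, LinearMap.sum_apply, DualAux.phiAux_apply, DualAux.bmap_apply]
    calc ∑ j, ∑ m, s x j • op (ρ (Pi.single m (ι 1 m))) • φ (π (Pi.single j 1))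
        = ∑ j, s x j • ∑ m, op (ρ (Pi.single m (ι 1 m))) • φ (π (Pi.single j 1)) := by
          refine Finset.sum_congr rfl fun j _ => ?_
          rw [Finset.smul_sum]
      _ = ∑ j, s x j • φ (π (Pi.single j 1)) := by
          refine Finset.sum_congr rfl fun j _ => ?_
          rw [hone]
      _ = φ x := hsum2 φ x
  have hVsurj : Function.Surjective (DualAux.Vmap ι s (P := P)) := fun φ =>
    ⟨DualAux.Umap ρ π φ, LinearMap.congr_fun hVU φ⟩
  refine ⟨Module.Finite.of_surjective _ hVsurj,
    Module.Projective.of_split (DualAux.Umap ρ π) (DualAux.Vmap ι s) hVU, inj, surj⟩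

end
end
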